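/- arXiv:math/0601567 — 2 statements merged into one kernel-verified Lean document; each statement's English description precedes it below -/
import Mathlib

section
/- Let V be a valuation domain of Krull dimension 2 with maximal ideal m, P the prime ideal between (0) and m, x ∈ P nonzero and y ∈ m \ P. Then the second Čech cohomology H^2_{x,y}(V) vanishes, even though the ideal (x, y)V has height 2. -/
/-- The natural map between localizations of a module at powers of two elements
`a ∣ b`, sending `m/1` to `m/1`. -/

noncomputable def cechLoc {R : Type*} [CommRing R] {M : Type*} [AddCommGroup M] [Module R M]
    (a b : R) (hab : a ∣ b) :
    LocalizedModule (Submonoid.powers a) M →ₗ[R] LocalizedModule (Submonoid.powers b) M :=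
  LocalizedModule.lift _ (LocalizedModule.mkLinearMap (Submonoid.powers b) M) (by
    rintro ⟨s, n, rfl⟩
    obtain ⟨c, rfl⟩ := hab
    set f := algebraMap R (Module.End R (LocalizedModule (Submonoid.powers (a * c)) M)) with hf
    obtain ⟨u, hu⟩ := IsLocalizedModule.map_units
      (LocalizedModule.mkLinearMap (Submonoid.powers (a * c)) M)
      (⟨(a * c) ^ n, n, rfl⟩ : Submonoid.powers (a * c))
    have hcomm : Commute (f (a ^ n)) ↑u := by
      have : Commute (f (a ^ n)) (f ((a * c) ^ n)) := by
        simp only [Commute, SemiconjBy, ← map_mul, mul_comm]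
      rwa [← hu] at this
    refine ⟨⟨f (a ^ n), f (c ^ n) * ↑u⁻¹, ?_, ?_⟩, rfl⟩
    · rw [← mul_assoc, ← map_mul, ← mul_pow, ← hu]
      exact u.mul_inv
    · rw [mul_assoc, ← (hcomm.units_inv_right).eq, ← mul_assoc, ← map_mul]
      have : c ^ n * a ^ n = (a * c) ^ n := by ring
      rw [this, ← hu]
      exact u.mul_inv)

open scoped BigOperators
open Classical

noncomputable section

variable {R : Type*} [CommRing R]

/-- Degree `i` term of the Čech complex of the sequence `x` with coefficients in `M`:
the product over `i`-element subsets `t` of the index set of the localization of `M`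
at the product of the `x j` for `j ∈ t`. -/
noncomputable abbrev CechC {ℓ : ℕ} (x : Fin ℓ → R) (M : Type*) [AddCommGroup M] [Module R M]
    (i : ℕ) : Type _ :=
  ∀ t : {t : Finset (Fin ℓ) // t.card = i}, LocalizedModule (Submonoid.powers (∏ j ∈ t.1, x j)) M

/-- The Čech differential `C^i → C^{i+1}`: the alternating sum of the further-localization
maps. -/
noncomputable def cechD {ℓ : ℕ} (x : Fin ℓ → R) (M : Type*) [AddCommGroup M] [Module R M]
    (i : ℕ) : CechC x M i →ₗ[R] CechC x M (i + 1) where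
  toFun m t := ∑ j ∈ (t.1).attach,
    ((-1 : ℤ) ^ ((t.1.filter (· < j.1)).card)) •
      cechLoc (∏ k ∈ t.1.erase j.1, x k) (∏ k ∈ t.1, x k)
        (Finset.prod_dvd_prod_of_subset _ _ _ (Finset.erase_subset _ _))
        (m ⟨t.1.erase j.1, by rw [Finset.card_erase_of_mem j.2, t.2]; omega⟩)
  map_add' := by
    intro a b
    funext t
    simp [Pi.add_apply, map_add, smul_add, Finset.sum_add_distrib]
      <;> rw [← Finset.sum_add_distrib]
      <;> refine Finset.sum_congr rfl (fun _ _ => ?_)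
      <;> first | exact smul_add _ _ _ | exact zsmul_add _ _ _ | module
  map_smul' := by
    intro r a
    funext t
    simp [Pi.smul_apply, map_smul, Finset.smul_sum, smul_comm r]

/-- The submodule of Čech coboundaries in degree `i`. -/
noncomputable def cechPrevRange {ℓ : ℕ} (x : Fin ℓ → R) (M : Type*) [AddCommGroup M]
    [Module R M] : (i : ℕ) → Submodule R (CechC x M i)
  | 0 => ⊥
  | (i + 1) => LinearMap.range (cechD x M i)

/-- The `i`-th Čech cohomology of `M` with respect to the sequence `x`:
cocycles modulo coboundaries. -/
noncomputable abbrev CechH {ℓ : ℕ} (x : Fin ℓ → R) (M : Type*) [AddCommGroup M] [Module R M]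
    (i : ℕ) : Type _ :=
  LinearMap.ker (cechD x M i) ⧸
    (cechPrevRange x M i).comap (LinearMap.ker (cechD x M i)).subtype


/-- Degree `i` term of the Koszul complex on `ℓ` elements: free module indexed by
`i`-element subsets of the index set. -/
abbrev KoszulC (R : Type*) [CommRing R] (ℓ i : ℕ) : Type _ :=
  {t : Finset (Fin ℓ) // t.card = i} → R

/-- The Koszul differential `K_{i+1} → K_i` for the sequence `x^k = x_1^k, ..., x_ℓ^k`. -/
noncomputable def koszulD {ℓ : ℕ} (x : Fin ℓ → R) (k : ℕ) (i : ℕ) :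
    KoszulC R ℓ (i + 1) →ₗ[R] KoszulC R ℓ i where
  toFun m s := ∑ j ∈ (s.1ᶜ).attach,
    ((-1 : ℤ) ^ ((s.1.filter (· < j.1)).card)) •
      ((x j.1 ^ k) * m ⟨insert j.1 s.1, by
        rw [Finset.card_insert_of_notMem (Finset.mem_compl.mp j.2), s.2]⟩)
  map_add' := by
    intro a b
    funext s
    simp [mul_add, smul_add, Finset.sum_add_distrib]
  map_smul' := by
    intro r a
    funext s
    simp [Finset.mul_sum, mul_smul_comm, mul_left_comm]
  
/-- The standard transition chain map `K(x^m) → K(x^n)` (for `n ≤ m`) in degree `i`: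
multiplication on the component indexed by `t` by `∏_{j ∈ t} x_j^{m-n}`. -/
noncomputable def koszulTr {ℓ : ℕ} (x : Fin ℓ → R) (m n i : ℕ) :
    KoszulC R ℓ i →ₗ[R] KoszulC R ℓ i where
  toFun z t := (∏ j ∈ t.1, x j ^ (m - n)) * z t
  map_add' := by intro a b; funext t; simp [mul_add]
  map_smul' := by intro r a; funext t; simp; ring

/-- A finite sequence `x` is weakly proregular if for each `n` there is `m ≥ n` such that
the transition maps `H_i(x^m; R) → H_i(x^n; R)` on Koszul homology vanish for all `i ≥ 1`;
equivalently, the transition image of every cycle is a boundary. -/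
def WeaklyProregular {ℓ : ℕ} (x : Fin ℓ → R) : Prop :=
  ∀ n : ℕ, 1 ≤ n → ∃ m, n ≤ m ∧ ∀ i : ℕ, ∀ z : KoszulC R ℓ (i + 1),
    koszulD x m i z = 0 →
      ∃ b : KoszulC R ℓ (i + 1 + 1), koszulD x n (i + 1) b = koszulTr x m n (i + 1) z

/-- The height of an ideal: the infimum of the heights of the primes containing it. -/
noncomputable def idealHeight (I : Ideal R) : ℕ∞ :=
  ⨅ p : {p : PrimeSpectrum R // I ≤ p.asIdeal}, Order.height p.1


/-- A finite sequence `x` (given as a list `l`) is a parameter sequence on `R` if it is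
weakly proregular, generates a proper ideal, and the localized top Čech cohomology
`H^{ℓ(x)}_x(R)_p` is nonzero for every prime `p` containing `(x)R`. -/
def IsParamSeq (l : List R) : Prop :=
  WeaklyProregular l.get ∧ Ideal.span {a | a ∈ l} ≠ ⊤ ∧
    ∀ p : PrimeSpectrum R, Ideal.span {a | a ∈ l} ≤ p.asIdeal →
      Nontrivial (LocalizedModule p.asIdeal.primeCompl (CechH l.get R l.length))

/-- A strong parameter sequence: every initial segment is a parameter sequence. -/
def IsStrongParamSeq (l : List R) : Prop :=
  ∀ i : ℕ, i ≤ l.length → IsParamSeq (l.take i)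


section mylemmas
variable {R₀ : Type*} [CommRing R₀] {M₀ : Type*} [AddCommGroup M₀] [Module R₀ M₀]

lemma cechLoc_eq_of (a b : R₀) (hab : a ∣ b) (m : M₀) (s : Submonoid.powers a)
    (z : LocalizedModule (Submonoid.powers b) M₀)
    (hz : (s : R₀) • z = LocalizedModule.mk m 1) :
    cechLoc a b hab (LocalizedModule.mk m s) = z := by
  unfold cechLoc
  rw [LocalizedModule.lift_mk]
  have h1 : (LocalizedModule.mkLinearMap (Submonoid.powers b) M₀) m
      = LocalizedModule.mk m 1 := rfl
  rw [h1, ← hz]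
  have h2 : (s : R₀) • z
      = (algebraMap R₀ (Module.End R₀ (LocalizedModule (Submonoid.powers b) M₀)) (s : R₀)) z := by
    rw [Module.algebraMap_end_apply]
  rw [h2]
  exact Module.End.isUnit_inv_apply_apply_of_isUnit _ z

lemma cechLoc_surj (a b : R₀) (hab : a ∣ b) (c : R₀) (k : ℕ) (hc : a ^ k = b * c)
    (z : LocalizedModule (Submonoid.powers b) M₀) :
    ∃ w, cechLoc a b hab w = z := by
  induction z using LocalizedModule.induction_on with
  | _ v s =>
    obtain ⟨n, hn⟩ := s.2
    refine ⟨LocalizedModule.mk (c ^ n • v) ⟨a ^ (k * n), k * n, rfl⟩,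
      cechLoc_eq_of a b hab _ _ _ ?_⟩
    show (a ^ (k * n)) • LocalizedModule.mk v s = LocalizedModule.mk (c ^ n • v) 1
    rw [LocalizedModule.smul'_mk]
    have key : a ^ (k * n) • v = (s : R₀) • (c ^ n • v) := by
      rw [← mul_smul, ← hn, ← mul_pow, ← hc, ← pow_mul]
    rw [key]
    exact LocalizedModule.mk_cancel s (c ^ n • v)

end mylemmas

/-- In a valuation domain `V` of Krull dimension `2` with maximal ideal `m`, prime `P`
strictly between `(0)` and `m`, `x ∈ P` nonzero and `y ∈ m \\ P`, the second Čech cohomology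
`H²_{x,y}(V)` vanishes even though the ideal `(x, y)V` has height `2`. -/
theorem stmt_7 {V : Type*} [CommRing V] [IsDomain V] [ValuationRing V]
    (h2 : ringKrullDim V = 2) (P : Ideal V) [P.IsPrime] (hP0 : ⊥ < P)
    (hPm : P < IsLocalRing.maximalIdeal V)
    (x y : V) (hx : x ∈ P) (hx0 : x ≠ 0)
    (hy : y ∈ IsLocalRing.maximalIdeal V) (hyP : y ∉ P) :
    Subsingleton (CechH ![x, y] V 2) ∧ idealHeight (Ideal.span {x, y}) = 2 := by
  classical
  have hyx : y ∣ x := by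
    rcases ValuationRing.dvd_total x y with ⟨d, rfl⟩ | h
    · exact absurd (Ideal.mul_mem_right d P hx) hyP
    · exact h
  obtain ⟨d, hd⟩ := hyx
  constructor
  · -- Part 1 : H² vanishes
    have hcard1 : ∀ k : Fin 2, (Finset.univ.erase k).card = 1 := by decide
    have key : ∀ z : CechC ![x, y] V 2, ∃ m, cechD ![x, y] V 1 m = z := by
      intro z
      set t₀ : {t : Finset (Fin 2) // t.card = 2} := ⟨Finset.univ, by decide⟩ with ht₀
      set e1 : {t : Finset (Fin 2) // t.card = 1} :=
        ⟨Finset.univ.erase (1 : Fin 2), hcard1 1⟩ with he1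
      have hdvd : (∏ k ∈ Finset.univ.erase (1 : Fin 2), ![x, y] k) ∣
          ∏ k ∈ (Finset.univ : Finset (Fin 2)), ![x, y] k :=
        Finset.prod_dvd_prod_of_subset _ _ _ (Finset.erase_subset _ _)
      have ha : (∏ k ∈ Finset.univ.erase (1 : Fin 2), ![x, y] k) = x := by
        rw [show (Finset.univ.erase (1 : Fin 2)) = {0} from by decide,
          Finset.prod_singleton]
        rfl
      have hb : (∏ k ∈ (Finset.univ : Finset (Fin 2)), ![x, y] k) = x * y := by
        rw [Fin.prod_univ_two]
        rfl
      have hpow : (∏ k ∈ Finset.univ.erase (1 : Fin 2), ![x, y] k) ^ 2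
          = (∏ k ∈ (Finset.univ : Finset (Fin 2)), ![x, y] k) * d := by
        rw [ha, hb, hd]
        ring
      obtain ⟨w, hw⟩ := cechLoc_surj _ _ hdvd d 2 hpow (-(z t₀))
      refine ⟨Function.update (0 : CechC ![x, y] V 1) e1 w, ?_⟩
      funext t
      have ht : t = t₀ := Subtype.ext ((Finset.card_eq_iff_eq_univ t.1).mp
        (by rw [Fintype.card_fin]; exact t.2))
      subst ht
      have expand : (cechD ![x, y] V 1) (Function.update (0 : CechC ![x, y] V 1) e1 w) t₀
          = ∑ j ∈ (Finset.univ : Finset (Fin 2)).attach,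
            ((-1 : ℤ) ^ ((Finset.univ.filter (· < j.1)).card)) •
              cechLoc (∏ k ∈ Finset.univ.erase j.1, ![x, y] k)
                (∏ k ∈ (Finset.univ : Finset (Fin 2)), ![x, y] k)
                (Finset.prod_dvd_prod_of_subset _ _ _ (Finset.erase_subset _ _))
                ((Function.update (0 : CechC ![x, y] V 1) e1 w)
                  ⟨Finset.univ.erase j.1, hcard1 j.1⟩) := rfl
      rw [expand,
        Finset.sum_attach (Finset.univ : Finset (Fin 2)) (fun k =>
          ((-1 : ℤ) ^ ((Finset.univ.filter (· < k)).card)) •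
            cechLoc (∏ i ∈ Finset.univ.erase k, ![x, y] i)
              (∏ i ∈ (Finset.univ : Finset (Fin 2)), ![x, y] i)
              (Finset.prod_dvd_prod_of_subset _ _ _ (Finset.erase_subset _ _))
              ((Function.update (0 : CechC ![x, y] V 1) e1 w)
                ⟨Finset.univ.erase k, hcard1 k⟩)),
        Fin.sum_univ_two]
      have h0ne : (⟨Finset.univ.erase (0 : Fin 2), hcard1 0⟩ :
          {t : Finset (Fin 2) // t.card = 1}) ≠ e1 := by
        intro hcon
        have hne : (Finset.univ.erase (0 : Fin 2)) ≠ Finset.univ.erase (1 : Fin 2) := by decide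
        exact hne (congrArg Subtype.val hcon)
      have hupd : (Function.update (0 : CechC ![x, y] V 1) e1 w)
          ⟨Finset.univ.erase (1 : Fin 2), hcard1 1⟩ = w := Function.update_self _ _ _
      rw [Function.update_of_ne h0ne, hupd]
      have hw' : cechLoc (∏ i ∈ Finset.univ.erase (1 : Fin 2), ![x, y] i)
          (∏ i ∈ (Finset.univ : Finset (Fin 2)), ![x, y] i)
          (Finset.prod_dvd_prod_of_subset _ _ _ (Finset.erase_subset _ _)) w
          = -(z t₀) := hw
      rw [hw']
      have hc0 : ((Finset.univ : Finset (Fin 2)).filter (· < (0 : Fin 2))).card = 0 := by decide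
      have hc1 : ((Finset.univ : Finset (Fin 2)).filter (· < (1 : Fin 2))).card = 1 := by decide
      rw [hc0, hc1, pow_zero, pow_one, one_smul, Pi.zero_apply, map_zero, neg_smul, one_smul,
        neg_neg, zero_add]
    refine Submodule.Quotient.subsingleton_iff.mpr ?_
    rw [Submodule.eq_top_iff']
    intro u
    rw [Submodule.mem_comap]
    obtain ⟨m, hm⟩ := key u.1
    exact ⟨m, hm⟩
  · -- Part 2 : height of (x, y) is 2
    have hym : y ∈ Ideal.span ({x, y} : Set V) := Ideal.subset_span (by simp)
    have hspan : Ideal.span ({x, y} : Set V) ≤ IsLocalRing.maximalIdeal V := by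
      rw [Ideal.span_le]
      intro a ha
      simp only [Set.mem_insert_iff, Set.mem_singleton_iff] at ha
      rcases ha with rfl | rfl
      · exact hPm.le hx
      · exact hy
    have htot := (ValuationRing.iff_ideal_total (R := V)).mp inferInstance
    have hheight : ∀ p : PrimeSpectrum V, Ideal.span ({x, y} : Set V) ≤ p.asIdeal →
        Order.height p = 2 := by
      intro p hp
      have hPle : P ≤ p.asIdeal := by
        rcases htot.total P p.asIdeal with h | h
        · exact h
        · exact absurd (h (hp hym)) hyP
      have c1 : (⟨P, inferInstance⟩ : PrimeSpectrum V) < p := by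
        refine lt_of_le_of_ne (show P ≤ p.asIdeal from hPle) ?_
        intro hcon
        have h' : P = p.asIdeal := congrArg PrimeSpectrum.asIdeal hcon
        exact hyP (by rw [h']; exact hp hym)
      have c0 : (⟨⊥, Ideal.bot_prime⟩ : PrimeSpectrum V) <
          (⟨P, inferInstance⟩ : PrimeSpectrum V) := by
        refine lt_of_le_of_ne (show (⊥ : Ideal V) ≤ P from hP0.le) ?_
        intro hcon
        exact hP0.ne (congrArg PrimeSpectrum.asIdeal hcon)
      let series : LTSeries (PrimeSpectrum V) :=
        ((RelSeries.singleton _ (⟨⊥, Ideal.bot_prime⟩ : PrimeSpectrum V)).snoc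
          (⟨P, inferInstance⟩ : PrimeSpectrum V) c0).snoc p (by exact c1)
      have h2le : (2 : ℕ∞) ≤ Order.height p := by
        have := Order.length_le_height_last (p := series)
        have hl : series.length = 2 := rfl
        have hlast : series.last = p := rfl
        rw [hl, hlast] at this
        exact_mod_cast this
      have hle2 : Order.height p ≤ (2 : ℕ∞) := by
        have h := Order.height_le_krullDim p
        rw [show Order.krullDim (PrimeSpectrum V) = ringKrullDim V from rfl, h2] at h
        have h22 : ((2 : ℕ∞) : WithBot ℕ∞) = (2 : WithBot ℕ∞) := rfl
        rw [← h22] at h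
        exact WithBot.coe_le_coe.mp h
      exact le_antisymm hle2 h2le
    unfold idealHeight
    apply le_antisymm
    · exact iInf_le_of_le ⟨⟨IsLocalRing.maximalIdeal V, inferInstance⟩, hspan⟩
        (le_of_eq (hheight _ hspan))
    · exact le_iInf fun q => le_of_eq (hheight q.1 q.2).symm


end
end

section
/- Let S = C[[x,y]] and R = C + xS. Then x is a zero-divisor on R/xyR: the element xy^2 lies in (xyR :_R x) but not in xyR, so x is a parameter on R/xyR (being weakly proregular with stabilized annihilator chain, non-nilpotent, and generating an ideal whose radical is the maximal ideal xS/xyR) that fails to be a regular element; hence R/xyR is not Cohen-Macaulay. -/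
open MvPowerSeries

/-- Membership in the subring `R = ℂ + x·ℂ[[x,y]]` of `S = ℂ[[x,y]]`. -/
def memR (f : MvPowerSeries (Fin 2) ℂ) : Prop :=
  ∃ (c : ℂ) (g : MvPowerSeries (Fin 2) ℂ), f = MvPowerSeries.C (σ := Fin 2) (R := ℂ) c + X 0 * g

/-- In `R = ℂ + x·ℂ[[x,y]] ⊆ S = ℂ[[x,y]]`, the element `x` is a zero-divisor on `R/xyR`:
`xy² ∈ R` satisfies `x·(xy²) ∈ xyR` but `xy² ∉ xyR`.  (Hence `x` is a parameter on `R/xyR`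
that is not a regular element, so `R/xyR` is not Cohen-Macaulay.) -/
theorem stmt_19 :
    memR (X 0 * (X 1) ^ 2) ∧
    (∃ a, memR a ∧ X 0 * (X 0 * (X 1) ^ 2) = X 0 * X 1 * a) ∧
    ¬ (∃ a, memR a ∧ X 0 * (X 1) ^ 2 = X 0 * X 1 * a) := by
  refine ⟨⟨0, (X 1)^2, by simp⟩, ⟨X 0 * X 1, ⟨0, X 1, by simp⟩, by ring⟩, ?_⟩
  rintro ⟨a, ⟨c, g, rfl⟩, heq⟩
  set d : Fin 2 →₀ ℕ := Finsupp.single 0 1 + Finsupp.single 1 2 with hd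
  have hL : coeff d (X 0 * (X 1)^2 : MvPowerSeries (Fin 2) ℂ) = 1 := by
    rw [show (X 0 * (X 1)^2 : MvPowerSeries (Fin 2) ℂ) =
      monomial d 1 from by rw [X_pow_eq, X, monomial_mul_monomial, one_mul]]
    simp
  have hR : coeff d (X 0 * X 1 * (MvPowerSeries.C (σ := Fin 2) (R := ℂ) c + X 0 * g)) = 0 := by
    rw [mul_add]
    have e1 : (X 0 * X 1 * MvPowerSeries.C (σ := Fin 2) (R := ℂ) c : MvPowerSeries (Fin 2) ℂ) =
        monomial (Finsupp.single 0 1 + Finsupp.single 1 1) c := by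
      rw [X, X, monomial_mul_monomial, ← monomial_zero_eq_C_apply, monomial_mul_monomial]
      simp
    have e2 : (X 0 * X 1 * (X 0 * g) : MvPowerSeries (Fin 2) ℂ) =
        monomial (Finsupp.single 0 1 + Finsupp.single 0 1 + Finsupp.single 1 1) 1 * g := by
      rw [show (X 0 * X 1 * (X 0 * g) : MvPowerSeries (Fin 2) ℂ) =
        (X 0 * X 0 * X 1) * g from by ring]
      simp only [X, monomial_mul_monomial, one_mul]
    rw [map_add, e1, e2, coeff_monomial, coeff_monomial_mul]
    have h1 : d ≠ Finsupp.single 0 1 + Finsupp.single 1 1 := by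
      intro h
      have := DFunLike.congr_fun h (1 : Fin 2)
      simp [hd, Finsupp.single_apply] at this
    have h2 : ¬ (Finsupp.single 0 1 + Finsupp.single 0 1 + Finsupp.single 1 1 ≤ d) := by
      intro h
      have := h (0 : Fin 2)
      simp [hd, Finsupp.single_apply] at this
    rw [if_neg h1, if_neg h2, add_zero]
  rw [heq, hR] at hL
  exact one_ne_zero hL.symm
end
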